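/- Let M be a Riemannian manifold, Σ ⊂ M a smooth m-dimensional submanifold, p₀ ∈ M, and r the distance to p₀, smooth near p ∈ Σ with p ≠ p₀. Suppose ∇²r ≥ Ψ(r)(g − dr⊗dr) at p, and let φ : [0,∞) → [0,∞) be C¹. Then the tangential divergence of X = φ(r)∇̄r along Σ satisfies div_Σ(X) ≥ (m−1)·φΨ + φ' + (φΨ − φ')|(∇̄r)^⊥|² at p, where (∇̄r)^⊥ is the component of ∇̄r normal to Σ; in particular for m = 2: div_Σ(X) ≥ φΨ + φ' + (φΨ − φ')|(∇̄r)^⊥|². -/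

import Mathlib

open Real

/-- Pointwise lower bound on the tangential divergence of `X = φ(r)∇̄r` along an
`m`-dimensional submanifold `Σ`.  At the point `p`, the ambient tangent space is
the inner product space `V`, `u = ∇̄r` is a unit vector, `B = Hess r` satisfies
the comparison bound `B(v,v) ≥ Ψ(‖v‖² − ⟨u,v⟩²)`, `e` is an orthonormal basis of
`T_pΣ`, `φ, φ'` are the values of the `C¹` function `φ ≥ 0` and its derivative at
`r(p)`.  Then, with `div_Σ X = φ ∑ᵢ B(eᵢ,eᵢ) + φ' ∑ᵢ ⟨u,eᵢ⟩²` and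
`|(∇̄r)^⊥|² = 1 − ∑ᵢ ⟨u,eᵢ⟩²`,
`div_Σ X ≥ (m−1)φΨ + φ' + (φΨ − φ')|(∇̄r)^⊥|²`  (for `m = 2` this is
`φΨ + φ' + (φΨ − φ')|(∇̄r)^⊥|²`). -/
theorem stmt_6 (V : Type*) [NormedAddCommGroup V] [InnerProductSpace ℝ V]
    (m : ℕ) (hm : 1 ≤ m) (e : Fin m → V) (he : Orthonormal ℝ e)
    (u : V) (hu : ‖u‖ = 1) (B : V → V → ℝ) (Ψ φ φ' : ℝ)
    (hB : ∀ v : V, Ψ * (‖v‖ ^ 2 - (inner ℝ u v : ℝ) ^ 2) ≤ B v v)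
    (hφ : 0 ≤ φ) :
    ((m : ℝ) - 1) * (φ * Ψ) + φ'
        + (φ * Ψ - φ') * (1 - ∑ i, (inner ℝ u (e i) : ℝ) ^ 2)
      ≤ φ * (∑ i, B (e i) (e i)) + φ' * (∑ i, (inner ℝ u (e i) : ℝ) ^ 2) := by
  have h1 : ∀ i, Ψ * (1 - (inner ℝ u (e i) : ℝ) ^ 2) ≤ B (e i) (e i) := by
    intro i
    have := hB (e i)
    rwa [he.1 i, one_pow] at this
  have h2 : Ψ * ((m : ℝ) - ∑ i, (inner ℝ u (e i) : ℝ) ^ 2) ≤ ∑ i, B (e i) (e i) := by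
    calc Ψ * ((m : ℝ) - ∑ i, (inner ℝ u (e i) : ℝ) ^ 2)
        = ∑ i, Ψ * (1 - (inner ℝ u (e i) : ℝ) ^ 2) := by
          simp [Finset.mul_sum, mul_sub, Finset.sum_sub_distrib, mul_comm]
      _ ≤ ∑ i, B (e i) (e i) := Finset.sum_le_sum fun i _ => h1 i
  have h3 := mul_le_mul_of_nonneg_left h2 hφ
  nlinarith [h3]
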